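/- arXiv:2105.13941 — 2 statements merged into one kernel-verified Lean document; each statement's English description precedes it below -/
import Mathlib

section
/- Let T = (V,R) be a linear transition system on a finite-dimensional ℚ-vector space V. For each k ≥ 1 let dom(T^k) = {x₀ ∈ V : ∃ x₁,…,x_k ∈ V with (x_{i},x_{i+1}) ∈ R for all 0 ≤ i < k}. Then each dom(T^k) is a ℚ-linear subspace of V, the chain is descending (dom(T^{k+1}) ⊆ dom(T^k)), and if moreover R is deterministic and dom(T^{k+1}) = dom(T^k) for some k, then dom^ω(T) = dom(T^k). In particular, for a deterministic linear transition system, dom^ω(T) is a ℚ-linear subspace of V and equals dom(T^k) for some k. -/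
open Module

section Defs

variable {V W : Type} [AddCommGroup V] [Module ℚ V] [AddCommGroup W] [Module ℚ W]

/-- A transition system is *deterministic* if each state has at most one successor. -/
def Deterministic (R : Set (V × V)) : Prop :=
  ∀ x y₁ y₂ : V, (x, y₁) ∈ R → (x, y₂) ∈ R → y₁ = y₂

/-- A transition system is *linear* if its relation is (the carrier of) a ℚ-linear
subspace of `V × V`. -/
def IsLinearRel (R : Set (V × V)) : Prop :=
  ∃ p : Submodule ℚ (V × V), (p : Set (V × V)) = R

/-- A transition system is *affine* if its relation is an affine subspace of `V × V`. -/
def IsAffineRel (R : Set (V × V)) : Prop :=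
  ∃ A : AffineSubspace ℚ (V × V), (A : Set (V × V)) = R

/-- A ℚ-linear map `s` is a *linear simulation* from `(V, R)` to `(W, S)`. -/
def Sim (R : Set (V × V)) (S : Set (W × W)) (s : V →ₗ[ℚ] W) : Prop :=
  ∀ x x' : V, (x, x') ∈ R → (s x, s x') ∈ S

/-- `dom^ω(T)`: the set of states from which an infinite trajectory exists. -/
def OmegaDom (R : Set (V × V)) : Set V :=
  {x | ∃ u : ℕ → V, u 0 = x ∧ ∀ k : ℕ, (u k, u (k + 1)) ∈ R}

/-- `dom(T^k)`: the set of states from which a trajectory of length `k` exists. -/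
def DomK (R : Set (V × V)) (k : ℕ) : Set V :=
  {x | ∃ u : ℕ → V, u 0 = x ∧ ∀ i : ℕ, i < k → (u i, u (i + 1)) ∈ R}

/-- A (deterministic linear) transition system has *rational spectrum* if the induced
linear map `T|_ω` on its ω-domain has characteristic polynomial splitting over ℚ. -/
def HasRationalSpectrum [FiniteDimensional ℚ V] (R : Set (V × V)) : Prop :=
  ∃ (p : Submodule ℚ V) (f : Module.End ℚ p),
    (p : Set V) = OmegaDom R ∧ (∀ x : p, ((x : V), (f x : V)) ∈ R) ∧
    ((LinearMap.charpoly f).map (RingHom.id ℚ)).Splits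

/-- The homogenization of an affine relation `R` with respect to a chosen
transition `(x₀, x₀')`. -/
def Homog (R : Set (V × V)) (x₀ x₀' : V) : Set ((V × ℚ) × (V × ℚ)) :=
  {p | p.1.2 = p.2.2 ∧ (p.1.1 + (1 - p.1.2) • x₀, p.2.1 + (1 - p.1.2) • x₀') ∈ R}

/-- A deterministic affine transition system is a ℚ-DATS if its relation is empty or
its homogenization is a deterministic linear transition system with rational spectrum. -/
def IsQDATS [FiniteDimensional ℚ V] (R : Set (V × V)) : Prop :=
  IsAffineRel R ∧ Deterministic R ∧
    (R = ∅ ∨ ∃ t ∈ R, IsLinearRel (Homog R t.1 t.2) ∧ Deterministic (Homog R t.1 t.2) ∧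
      HasRationalSpectrum (Homog R t.1 t.2))

/-- The map `s : V → Λ*` sending `x` to the evaluation functional `f ↦ f x`
(the simulation component of `α_Λ`). -/
def evalIn (Λ : Submodule ℚ (Module.Dual ℚ V)) : V →ₗ[ℚ] Module.Dual ℚ Λ :=
  Λ.subtype.dualMap ∘ₗ Module.Dual.eval ℚ V

/-- The relation component of `α_Λ`: the image of `R` under the simulation. -/
def ImageRel (R : Set (V × V)) (Λ : Submodule ℚ (Module.Dual ℚ V)) :
    Set (Module.Dual ℚ Λ × Module.Dual ℚ Λ) :=
  (fun p : V × V => (evalIn Λ p.1, evalIn Λ p.2)) '' R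

/-- `T` is `(Λ, Λ')`-deterministic. -/
def PairDet (R : Set (V × V)) (Λ Λ' : Submodule ℚ (Module.Dual ℚ V)) : Prop :=
  ∀ x₁ x₂ x₁' x₂' : V, (∀ f ∈ Λ, f x₁ = f x₂) → (x₁, x₁') ∈ R → (x₂, x₂') ∈ R →
    ∀ g ∈ Λ', g x₁' = g x₂'

/-- `Det(T, Λ)`: the functionals `f` such that `T` is `(Λ, span{f})`-deterministic. -/
def DetSet (R : Set (V × V)) (Λ : Submodule ℚ (Module.Dual ℚ V)) :
    Set (Module.Dual ℚ V) :=
  {f | PairDet R Λ (Submodule.span ℚ {f})}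

/-- The generating set of the generalized rational eigenspace `E_ℚ(T)`, where
`f : p → p` is the induced map `T|_ω` on the ω-domain `p`. -/
def GenRatEigenSet (p : Submodule ℚ V) (f : Module.End ℚ p) : Set (Module.Dual ℚ V) :=
  {g | ∃ (l : ℚ) (r : ℕ), 1 ≤ r ∧
    ∀ x : p, g (((f - l • (1 : Module.End ℚ p)) ^ r) x : V) = 0}

end Defs

/-- A bundled finite-dimensional ℚ-vector space. -/
structure QVec where
  carrier : Type
  [grp : AddCommGroup carrier]
  [mod : Module ℚ carrier]
  [fin : FiniteDimensional ℚ carrier]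

attribute [instance] QVec.grp QVec.mod QVec.fin


def domSubmodule {V : Type} [AddCommGroup V] [Module ℚ V]
    (P : Submodule ℚ (V × V)) (k : ℕ) : Submodule ℚ V where
  carrier := DomK (P : Set (V × V)) k
  zero_mem' := ⟨fun _ => 0, rfl, fun _ _ => P.zero_mem⟩
  add_mem' := by
    rintro a b ⟨u, hu0, hu⟩ ⟨v, hv0, hv⟩
    exact ⟨fun i => u i + v i, by simp only []; rw [hu0, hv0], fun i hi => P.add_mem (hu i hi) (hv i hi)⟩
  smul_mem' := by
    rintro c a ⟨u, hu0, hu⟩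
    exact ⟨fun i => c • u i, by simp only []; rw [hu0], fun i hi => P.smul_mem c (hu i hi)⟩

/-- for a linear transition system the sets `dom(T^k)` are linear
subspaces forming a descending chain, and for a deterministic linear transition
system a stabilization point of the chain equals `dom^ω(T)`; in particular
`dom^ω(T)` is a linear subspace and equals some `dom(T^k)`. -/
theorem dom_chain_stabilizes
    (V : Type) [AddCommGroup V] [Module ℚ V] [FiniteDimensional ℚ V]
    (R : Set (V × V)) (hlin : IsLinearRel R) :
    (∀ k : ℕ, 1 ≤ k → ∃ p : Submodule ℚ V, (p : Set V) = DomK R k) ∧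
    (∀ k : ℕ, 1 ≤ k → DomK R (k + 1) ⊆ DomK R k) ∧
    (Deterministic R →
      ∀ k : ℕ, 1 ≤ k → DomK R (k + 1) = DomK R k → OmegaDom R = DomK R k) ∧
    (Deterministic R →
      ∃ k : ℕ, 1 ≤ k ∧ OmegaDom R = DomK R k ∧
        ∃ p : Submodule ℚ V, (p : Set V) = OmegaDom R) := by
  obtain ⟨P, hP⟩ := hlin
  subst hP
  have h2 : ∀ k : ℕ, 1 ≤ k → DomK (P : Set (V × V)) (k + 1) ⊆ DomK (P : Set (V × V)) k := by
    rintro k _ x ⟨u, hu0, hu⟩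
    exact ⟨u, hu0, fun i hi => hu i (Nat.lt_succ_of_lt hi)⟩
  have h3 : ∀ k : ℕ, 1 ≤ k → DomK (P : Set (V × V)) (k + 1) = DomK (P : Set (V × V)) k →
      OmegaDom (P : Set (V × V)) = DomK (P : Set (V × V)) k := by
    intro k hk heq
    ext x
    constructor
    · rintro ⟨u, hu0, hu⟩
      exact ⟨u, hu0, fun i _ => hu i⟩
    · intro hx
      have hstep : ∀ y ∈ DomK (P : Set (V × V)) k, ∃ z, z ∈ DomK (P : Set (V × V)) k ∧ (y, z) ∈ (P : Set (V × V)) := by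
        intro y hy
        rw [← heq] at hy
        obtain ⟨u, hu0, hu⟩ := hy
        refine ⟨u 1, ⟨fun i => u (i + 1), rfl, fun i hi => hu (i + 1) (by omega)⟩, ?_⟩
        rw [← hu0]
        exact hu 0 (by omega)
      let step : {z // z ∈ DomK (P : Set (V × V)) k} → {z // z ∈ DomK (P : Set (V × V)) k} :=
        fun z => ⟨(hstep z.1 z.2).choose, (hstep z.1 z.2).choose_spec.1⟩
      refine ⟨fun n => (step^[n] ⟨x, hx⟩).1, rfl, fun n => ?_⟩
      simp only [Function.iterate_succ_apply']
      exact (hstep _ (step^[n] ⟨x, hx⟩).2).choose_spec.2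
  refine ⟨fun k _ => ⟨domSubmodule P k, rfl⟩, h2, fun _ => h3, ?_⟩
  intro hdet
  obtain ⟨n, ⟨k, hk⟩, hmin⟩ := (wellFounded_lt (α := ℕ)).has_min
    (Set.range fun k => Module.finrank ℚ (domSubmodule P (k + 1))) ⟨_, ⟨0, rfl⟩⟩
  have hle : domSubmodule P (k + 2) ≤ domSubmodule P (k + 1) :=
    fun x hx => h2 (k + 1) (by omega) hx
  have hmin2 := hmin _ ⟨k + 1, rfl⟩
  simp only [] at hk hmin2
  have hmin2' : ¬ Module.finrank ℚ (domSubmodule P (k + 2)) < n := hmin2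
  have hrank : Module.finrank ℚ (domSubmodule P (k + 1)) ≤
      Module.finrank ℚ (domSubmodule P (k + 2)) := by omega
  have heq : domSubmodule P (k + 2) = domSubmodule P (k + 1) :=
    Submodule.eq_of_le_of_finrank_le hle hrank
  have hset : DomK (P : Set (V × V)) (k + 1 + 1) = DomK (P : Set (V × V)) (k + 1) := congrArg SetLike.coe heq
  have homega := h3 (k + 1) (by omega) hset
  exact ⟨k + 1, by omega, homega, domSubmodule P (k + 1), by rw [homega]; rfl⟩
end

section
/- Let V be a finite-dimensional ℚ-vector space and f : V → V a ℚ-linear map whose characteristic polynomial splits over ℚ (all eigenvalues of f are rational). Let v₁,…,v_m ∈ V and let L be the ℤ-span of {v₁,…,v_m}. Suppose x ∈ V satisfies f^k(x) ∈ L for every k ∈ ℕ. Then x belongs to the ℚ-span of the set {v ∈ V : ∃ λ ∈ ℤ, ∃ r ≥ 1, ((f − λ·id)^r)(v) = 0}, i.e., x lies in the sum of the generalized eigenspaces of f corresponding to integer eigenvalues. -/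
open Module

open Polynomial

section Aux

variable {V : Type} [AddCommGroup V] [Module ℚ V]

/-- Clearing denominators: an element of the ℚ-span of `s` has a nonzero integer
multiple in the ℤ-span of `s`. -/
lemma aux_exists_int_smul_mem (s : Set V) (w : V)
    (hw : w ∈ Submodule.span ℚ s) :
    ∃ c : ℤ, c ≠ 0 ∧ (c : ℚ) • w ∈ Submodule.span ℤ s := by
  induction hw using Submodule.span_induction with
  | mem y hy => exact ⟨1, one_ne_zero, by simpa using Submodule.subset_span hy⟩
  | zero => exact ⟨1, one_ne_zero, by simp⟩
  | add y z _ _ ihy ihz =>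
      obtain ⟨c, hc, hcy⟩ := ihy
      obtain ⟨d, hd, hdz⟩ := ihz
      refine ⟨c * d, mul_ne_zero hc hd, ?_⟩
      have : ((c * d : ℤ) : ℚ) • (y + z)
          = d • ((c : ℚ) • y) + c • ((d : ℚ) • z) := by
        rw [← Int.cast_smul_eq_zsmul ℚ d, ← Int.cast_smul_eq_zsmul ℚ c,
          smul_smul, smul_smul, smul_add]
        push_cast
        ring_nf
      rw [this]
      exact Submodule.add_mem _ (Submodule.smul_mem _ _ hcy) (Submodule.smul_mem _ _ hdz)
  | smul q y _ ih =>
      obtain ⟨c, hc, hcy⟩ := ih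
      refine ⟨(q.den : ℤ) * c, mul_ne_zero (by exact_mod_cast q.den_nz) hc, ?_⟩
      have key : (((q.den : ℤ) * c : ℤ) : ℚ) • (q • y) = q.num • ((c : ℚ) • y) := by
        rw [← Int.cast_smul_eq_zsmul ℚ q.num, smul_smul, smul_smul]
        push_cast
        rw [show (q.den : ℚ) * c * q = ((q.den : ℚ) * q) * c by ring, Rat.den_mul_eq_num]
      rw [key]
      exact Submodule.smul_mem _ _ hcy

/-- A submodule contained in a finitely generated ℤ-submodule is finitely generated. -/
lemma aux_fg_of_le {M : Type*} [AddCommGroup M] {N P : Submodule ℤ M}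
    (h : N ≤ P) (hP : P.FG) : N.FG := by
  haveI : IsNoetherian ℤ P := isNoetherian_of_fg_of_noetherian P hP
  have : N = (N.comap P.subtype).map P.subtype := by
    rw [Submodule.map_comap_subtype, inf_eq_right.mpr h]
  rw [this]
  exact (IsNoetherian.noetherian _).map _

/-- If all the products `μ ^ k * c` lie in a fixed finitely generated ℤ-submodule of ℚ,
with `c ≠ 0`, then `μ` is an integer. -/
lemma aux_integer_of_pow_mul_mem (μ : ℚ) (c : ℤ) (hc : c ≠ 0) (D : Submodule ℤ ℚ)
    (hD : D.FG) (h : ∀ k : ℕ, μ ^ k * (c : ℚ) ∈ D) : ∃ l : ℤ, (l : ℚ) = μ := by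
  set e : ℚ →ₗ[ℤ] ℚ := (((c : ℚ)⁻¹ • LinearMap.id : ℚ →ₗ[ℚ] ℚ)).restrictScalars ℤ with he
  have hc' : (c : ℚ) ≠ 0 := by exact_mod_cast hc
  set D' : Submodule ℤ ℚ := D.map e with hD'def
  have hD' : D'.FG := hD.map e
  have hpow : ∀ k : ℕ, μ ^ k ∈ D' := by
    intro k
    refine ⟨μ ^ k * (c : ℚ), h k, ?_⟩
    simp only [he, LinearMap.coe_restrictScalars, LinearMap.smul_apply, LinearMap.id_coe, id_eq,
      smul_eq_mul]
    field_simp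
  have hle : Subalgebra.toSubmodule (Algebra.adjoin ℤ ({μ} : Set ℚ)) ≤ D' := by
    rw [Algebra.adjoin_eq_span]
    rw [Submodule.span_le]
    intro z hz
    obtain ⟨n, rfl⟩ := Submonoid.mem_closure_singleton.mp hz
    exact hpow n
  have hfg : (Subalgebra.toSubmodule (Algebra.adjoin ℤ ({μ} : Set ℚ))).FG :=
    aux_fg_of_le hle hD'
  have hint : IsIntegral ℤ μ :=
    IsIntegral.of_mem_of_fg _ hfg μ (Algebra.self_mem_adjoin_singleton ℤ μ)
  obtain ⟨l, hl⟩ := IsIntegrallyClosed.isIntegral_iff.mp hint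
  exact ⟨l, by simpa using hl⟩

/-- If a polynomial with all roots integers annihilates `y` (through `f`), then `y` lies in the
span of generalized eigenvectors of integer eigenvalues. -/
lemma aux_ker_decomp (f : Module.End ℚ V) :
    ∀ (n : ℕ) (q : ℚ[X]), q.natDegree ≤ n → q ≠ 0 → q.Splits →
      (∀ μ : ℚ, q.IsRoot μ → ∃ l : ℤ, (l : ℚ) = μ) →
      ∀ y : V, (Polynomial.aeval f q) y = 0 →
      y ∈ Submodule.span ℚ {w : V | ∃ (l : ℤ) (r : ℕ), 1 ≤ r ∧
        ((f - (l : ℚ) • (1 : Module.End ℚ V)) ^ r) w = 0} := by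
  intro n
  induction n with
  | zero =>
      intro q hdeg hq0 _ _ y hy
      have hqC : q = C (q.coeff 0) := Polynomial.eq_C_of_natDegree_le_zero hdeg
      have hco : q.coeff 0 ≠ 0 := fun h => hq0 (by rw [hqC, h, map_zero])
      rw [hqC] at hy
      simp only [aeval_C, Module.algebraMap_end_apply] at hy
      have : y = 0 := by
        rcases smul_eq_zero.mp hy with h | h
        · exact absurd h hco
        · exact h
      simp [this]
  | succ n ih =>
      intro q hdeg hq0 hs hroots y hy
      rcases Nat.eq_zero_or_pos q.natDegree with hd0 | hdpos
      · -- degree 0: constant polynomial, y = 0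
        have hqC : q = C (q.coeff 0) := Polynomial.eq_C_of_natDegree_le_zero hd0.le
        have hco : q.coeff 0 ≠ 0 := fun h => hq0 (by rw [hqC, h, map_zero])
        rw [hqC] at hy
        simp only [aeval_C, Module.algebraMap_end_apply] at hy
        rcases smul_eq_zero.mp hy with h | h
        · exact absurd h hco
        · simp [h]
      · -- positive degree: take a root μ
        have hdne : q.degree ≠ 0 := by
          rw [Polynomial.degree_eq_natDegree hq0]
          exact_mod_cast hdpos.ne'
        obtain ⟨μ, hμ⟩ := Polynomial.Splits.exists_eval_eq_zero hs hdne
        have hroot : q.IsRoot μ := hμ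
        set m : ℕ := q.rootMultiplicity μ with hm
        have hmpos : 0 < m := (Polynomial.rootMultiplicity_pos hq0).mpr hroot
        set q₁ : ℚ[X] := q /ₘ (X - C μ) ^ m with hq₁
        have hfact : (X - C μ) ^ m * q₁ = q :=
          Polynomial.pow_mul_divByMonic_rootMultiplicity_eq q μ
        have hq₁0 : q₁ ≠ 0 := by
          intro h
          rw [h, mul_zero] at hfact
          exact hq0 hfact.symm
        have heval : ¬ (X - C μ) ∣ q₁ := by
          rw [Polynomial.dvd_iff_isRoot]
          exact Polynomial.eval_divByMonic_pow_rootMultiplicity_ne_zero μ hq0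
        have hco : IsCoprime ((X - C μ) ^ m) q₁ :=
          ((Polynomial.irreducible_X_sub_C μ).coprime_iff_not_dvd.mpr heval).pow_left
        have hker : y ∈ LinearMap.ker (aeval f ((X - C μ) ^ m)) ⊔
            LinearMap.ker (aeval f q₁) := by
          rw [Polynomial.sup_ker_aeval_eq_ker_aeval_mul_of_coprime f hco, hfact]
          exact hy
        obtain ⟨y₁, hy₁, y₂, hy₂, hsum⟩ := Submodule.mem_sup.mp hker
        obtain ⟨l, hl⟩ := hroots μ hroot
        have hy₁mem : y₁ ∈ Submodule.span ℚ {w : V | ∃ (l : ℤ) (r : ℕ), 1 ≤ r ∧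
            ((f - (l : ℚ) • (1 : Module.End ℚ V)) ^ r) w = 0} := by
          apply Submodule.subset_span
          refine ⟨l, m, hmpos, ?_⟩
          have : aeval f ((X - C μ) ^ m) = (f - μ • (1 : Module.End ℚ V)) ^ m := by
            rw [map_pow, map_sub, aeval_X, aeval_C, Module.algebraMap_end_eq_smul_id]
            rfl
          rw [hl]
          rw [LinearMap.mem_ker, this] at hy₁
          exact hy₁
        have hdeg₁ : q₁.natDegree ≤ n := by
          have h1 : q.natDegree = m + q₁.natDegree := by
            rw [← hfact, Polynomial.natDegree_mul (pow_ne_zero _ (Polynomial.X_sub_C_ne_zero μ)) hq₁0]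
            · simp [Polynomial.natDegree_pow]
          omega
        have hdvd : q₁ ∣ q := ⟨(X - C μ) ^ m, by rw [← hfact]; ring⟩
        have hs₁ : q₁.Splits :=
          Polynomial.Splits.of_dvd hs hq0 hdvd
        have hroots₁ : ∀ ν : ℚ, q₁.IsRoot ν → ∃ l : ℤ, (l : ℚ) = ν := by
          intro ν hν
          exact hroots ν (hν.dvd hdvd)
        have hy₂mem := ih q₁ hdeg₁ hq₁0 hs₁ hroots₁ y₂ (LinearMap.mem_ker.mp hy₂)
        rw [← hsum]
        exact Submodule.add_mem _ hy₁mem hy₂mem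

end Aux

/-- if `f` has rational spectrum and the whole forward orbit of `x`
under `f` lies in the ℤ-span of finitely many vectors, then `x` lies in the sum of
the generalized eigenspaces of `f` for integer eigenvalues. -/
theorem orbit_in_lattice_mem_integer_eigenspaces
    (V : Type) [AddCommGroup V] [Module ℚ V] [FiniteDimensional ℚ V]
    (f : Module.End ℚ V)
    (hsplit : ((LinearMap.charpoly f).map (RingHom.id ℚ)).Splits)
    (m : ℕ) (v : Fin m → V)
    (x : V) (hx : ∀ k : ℕ, (f ^ k) x ∈ Submodule.span ℤ (Set.range v)) :
    x ∈ Submodule.span ℚ {w : V | ∃ (l : ℤ) (r : ℕ), 1 ≤ r ∧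
      ((f - (l : ℚ) • (1 : Module.End ℚ V)) ^ r) w = 0} := by
  classical
  set O : ℕ → V := fun k => (f ^ k) x with hO
  set U : Submodule ℚ V := Submodule.span ℚ (Set.range O) with hU
  set M : Submodule ℤ V := Submodule.span ℤ (Set.range O) with hM
  have hxU : x ∈ U := Submodule.subset_span ⟨0, by simp [hO]⟩
  have hfO : ∀ k, f (O k) = O (k + 1) := by
    intro k
    simp only [hO, pow_succ']
    rfl
  have hfU : ∀ y ∈ U, f y ∈ U := by
    intro y hy
    induction hy using Submodule.span_induction with
    | mem z hz =>
        obtain ⟨k, rfl⟩ := hz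
        rw [hfO]
        exact Submodule.subset_span ⟨k + 1, rfl⟩
    | zero => simp
    | add a b _ _ iha ihb => rw [map_add]; exact Submodule.add_mem _ iha ihb
    | smul q a _ iha => rw [map_smul]; exact Submodule.smul_mem _ _ iha
  have hfM : ∀ y ∈ M, f y ∈ M := by
    intro y hy
    induction hy using Submodule.span_induction with
    | mem z hz =>
        obtain ⟨k, rfl⟩ := hz
        rw [hfO]
        exact Submodule.subset_span ⟨k + 1, rfl⟩
    | zero => simp
    | add a b _ _ iha ihb => rw [map_add]; exact Submodule.add_mem _ iha ihb
    | smul q a _ iha => rw [map_zsmul]; exact Submodule.smul_mem _ _ iha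
  have hMfg : M.FG := by
    refine aux_fg_of_le ?_ (Submodule.fg_span (Set.finite_range v))
    rw [hM, Submodule.span_le]
    rintro z ⟨k, rfl⟩
    exact hx k
  set g : Module.End ℚ U := f.restrict hfU with hg
  have hg_apply : ∀ (p : ℚ[X]) (y : U),
      ((Polynomial.aeval g p) y : V) = (Polynomial.aeval f p) (y : V) := by
    intro p
    induction p using Polynomial.induction_on' with
    | add p q ihp ihq => intro y; simp [ihp y, ihq y]
    | monomial k a =>
        intro y
        simp only [aeval_monomial]
        rw [hg, Module.End.mul_apply, Module.End.mul_apply]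
        rw [Module.End.pow_restrict]
        simp [Module.algebraMap_end_apply, LinearMap.restrict_apply]
  have hmin_f_splits : (minpoly ℚ f).Splits :=
    Polynomial.Splits.of_dvd (by simpa using hsplit) f.charpoly_monic.ne_zero
      (LinearMap.minpoly_dvd_charpoly f)
  have hdvd_g : minpoly ℚ g ∣ minpoly ℚ f := by
    refine minpoly.dvd ℚ g ?_
    refine LinearMap.ext fun y => Subtype.ext ?_
    rw [hg_apply, minpoly.aeval]
    simp
  have hfne : minpoly ℚ f ≠ 0 := minpoly.ne_zero (.of_finite ℚ f)
  have hgne : minpoly ℚ g ≠ 0 := minpoly.ne_zero (.of_finite ℚ g)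
  have hs_g : (minpoly ℚ g).Splits :=
    Polynomial.Splits.of_dvd hmin_f_splits hfne hdvd_g
  have hroots : ∀ μ : ℚ, (minpoly ℚ g).IsRoot μ → ∃ l : ℤ, (l : ℚ) = μ := by
    intro μ hroot
    have hev : g.HasEigenvalue μ := Module.End.hasEigenvalue_of_isRoot hroot
    obtain ⟨w, hw⟩ := hev.exists_hasEigenvector
    have hwv : f (w : V) = μ • (w : V) := by
      have h1 : g w = μ • w := hw.apply_eq_smul
      have h2 : ((g w : U) : V) = ((μ • w : U) : V) := congrArg _ h1
      simpa [hg, LinearMap.restrict_apply] using h2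
    have hw0 : (w : V) ≠ 0 := fun h => hw.2 (Subtype.ext h)
    have hwU : (w : V) ∈ Submodule.span ℚ (Set.range O) := by rw [← hU]; exact w.2
    obtain ⟨c, hc, hcw⟩ := aux_exists_int_smul_mem (Set.range O) (w : V) hwU
    rw [← hM] at hcw
    have hinj : LinearMap.ker (LinearMap.toSpanSingleton ℚ V (w : V)) = ⊥ := by
      rw [LinearMap.ker_eq_bot]
      exact smul_left_injective ℚ hw0
    obtain ⟨φ, hφ⟩ :=
      (LinearMap.toSpanSingleton ℚ V (w : V)).exists_leftInverse_of_injective hinj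
    have hφw : φ (w : V) = 1 := by
      have := congrArg (fun ψ : ℚ →ₗ[ℚ] ℚ => ψ 1) hφ
      simpa using this
    have hfkw : ∀ k : ℕ, (f ^ k) (w : V) = μ ^ k • (w : V) := by
      intro k
      induction k with
      | zero => simp
      | succ k ih =>
          rw [pow_succ', Module.End.mul_apply, ih, map_smul, hwv, smul_smul, ← pow_succ]
    have hfkM : ∀ k : ℕ, (f ^ k) ((c : ℚ) • (w : V)) ∈ M := by
      intro k
      induction k with
      | zero => simpa using hcw
      | succ k ih =>
          rw [pow_succ', Module.End.mul_apply]
          exact hfM _ ih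
    set D : Submodule ℤ ℚ := M.map (φ.restrictScalars ℤ) with hD
    have hDfg : D.FG := hMfg.map _
    have horb : ∀ k : ℕ, μ ^ k * (c : ℚ) ∈ D := by
      intro k
      refine ⟨(f ^ k) ((c : ℚ) • (w : V)), hfkM k, ?_⟩
      rw [map_smul, hfkw k]
      simp only [LinearMap.coe_restrictScalars, map_smul, hφw]
      rw [smul_eq_mul, smul_eq_mul]
      ring
    exact aux_integer_of_pow_mul_mem μ c hc D hDfg horb
  have hx0 : (Polynomial.aeval f (minpoly ℚ g)) x = 0 := by
    have h1 : (Polynomial.aeval g (minpoly ℚ g)) ⟨x, hxU⟩ = 0 := by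
      rw [minpoly.aeval]; rfl
    have h2 := congrArg (Subtype.val) h1
    rw [hg_apply] at h2
    simpa using h2
  exact aux_ker_decomp f (minpoly ℚ g).natDegree (minpoly ℚ g) le_rfl hgne hs_g hroots x hx0
end
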